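/- Let K ∈ M_+(ℝ_+×ℝ_+) and let L(t,s) = (K^{*₂})^{*₁}(t,s) be its iterated rearrangement. Then for every f ∈ M_+(ℝ_+) and every t > 0, (T_K f)^{**}(t) ≤ (T_L f*)^{**}(t), where h^{**}(t) = t^{-1} ∫_0^t h*. -/

import Mathlib

open MeasureTheory Set
open scoped ENNReal

noncomputable section

/-- The positive integral operator `T_K` on `ℝ₊`. -/
def TK (K : ℝ → ℝ → ℝ≥0∞) (f : ℝ → ℝ≥0∞) (x : ℝ) : ℝ≥0∞ :=
  ∫⁻ y in Ioi (0:ℝ), K x y * f y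

/-- Distribution function `μ_f(λ) = |{x ∈ ℝ₊ : f x > λ}|`. -/
def distrib (f : ℝ → ℝ≥0∞) (l : ℝ≥0∞) : ℝ≥0∞ :=
  volume {x : ℝ | 0 < x ∧ l < f x}

/-- Nonincreasing rearrangement `f*(t) = inf{λ : μ_f(λ) ≤ t}`. -/
def rearr (f : ℝ → ℝ≥0∞) (t : ℝ) : ℝ≥0∞ :=
  sInf {l : ℝ≥0∞ | distrib f l ≤ ENNReal.ofReal t}

/-- Extension of a real function to `ℝ≥0∞`. -/
def extE (F : ℝ → ℝ) (a : ℝ≥0∞) : ℝ≥0∞ :=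
  if a = ⊤ then ⊤ else ENNReal.ofReal (F a.toReal)

/-- Orlicz–Lorentz gauge functional `ρ_{Φ,u}`. -/
def ogauge (F : ℝ → ℝ) (u : ℝ → ℝ) (f : ℝ → ℝ≥0∞) : ℝ≥0∞ :=
  sInf {l : ℝ≥0∞ | 0 < l ∧
    (∫⁻ x in Ioi (0:ℝ), extE F (f x / l) * ENNReal.ofReal (u x)) ≤ 1}

/-- `F` is an N-function with density `φ`: `F x = ∫_0^x φ`, `φ` increasing from `ℝ₊` onto `ℝ₊`. -/
def IsNFunction (F φ : ℝ → ℝ) : Prop :=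
  StrictMonoOn φ (Ioi 0) ∧ MapsTo φ (Ioi 0) (Ioi 0) ∧ SurjOn φ (Ioi 0) (Ioi 0) ∧
    ∀ x : ℝ, 0 ≤ x → F x = ∫ y in (0:ℝ)..x, φ y

/-- `F(2t) ≈ F(t)` on `ℝ₊`. -/
def Doubling (F : ℝ → ℝ) : Prop := ∃ C > 0, ∀ t > 0, F (2 * t) ≤ C * F t

/-- A weight: nonnegative, measurable, locally integrable on `ℝ₊`. -/
def IsWeight (u : ℝ → ℝ) : Prop :=
  Measurable u ∧ (∀ x, 0 ≤ u x) ∧ LocallyIntegrableOn u (Ioi 0)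

/-- `U(x) = ∫_0^x u`. -/
def Uw (u : ℝ → ℝ) (x : ℝ) : ℝ := ∫ t in (0:ℝ)..x, u t

/-- `Ψ` (with density `ψ`) is the complementary N-function of the N-function `Φ`
(with density `φ`), i.e. `ψ = φ⁻¹` and `Ψ t = ∫_0^t φ⁻¹`. -/
def IsComplementary (F φ G ψ : ℝ → ℝ) : Prop :=
  IsNFunction F φ ∧ IsNFunction G ψ ∧ InvOn ψ φ (Ioi 0) (Ioi 0)

/-- `g` is the inverse of `f` on `[0,∞)`. -/
def IsInverseOn (g f : ℝ → ℝ) : Prop :=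
  (∀ x ≥ 0, g (f x) = x) ∧ (∀ y ≥ 0, f (g y) = y)

/-- Iterated rearrangement `L(t,s) = (K^{*₂})^{*₁}(t,s)`. -/
def iterRearr (K : ℝ → ℝ → ℝ≥0∞) (t s : ℝ) : ℝ≥0∞ :=
  rearr (fun x => rearr (fun y => K x y) s) t

/-- `α(λ,x) = ∫_x^∞ Φ(λ/U(y)) u(y) dy`. -/
def hardyAlpha (F : ℝ → ℝ) (u : ℝ → ℝ) (lam x : ℝ) : ℝ≥0∞ :=
  ∫⁻ y in Ioi x, extE F (ENNReal.ofReal lam / ENNReal.ofReal (Uw u y)) * ENNReal.ofReal (u y)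

/-- `β(λ,x) = ∫_x^∞ Φ(λ/y) u(y) dy`. -/
def hardyBeta (F : ℝ → ℝ) (u : ℝ → ℝ) (lam x : ℝ) : ℝ≥0∞ :=
  ∫⁻ y in Ioi x, ENNReal.ofReal (F (lam / y)) * ENNReal.ofReal (u y)

/-- The Hardy-averaging conditions (14)–(15) for an N-function `Φ` (density `φ`,
inverse density `ψ = φ⁻¹`) and weight `u`. -/
def HardyConditions (F φ ψ u : ℝ → ℝ) : Prop :=
  ∃ c > 0, (∀ lam > 0, ∀ x > 0,
      extE φ (ENNReal.ofReal c * hardyAlpha F u lam x / ENNReal.ofReal lam) *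
        ENNReal.ofReal (Uw u x) ≤ ENNReal.ofReal (lam / c)) ∧
    (∀ lam > 0, ∀ x > 0,
      (∫⁻ y in Ioo (0:ℝ) x,
        extE ψ ((ENNReal.ofReal c * hardyBeta F u lam x / ENNReal.ofReal lam) *
          ENNReal.ofReal (y / Uw u y)) * ENNReal.ofReal (y * u y / Uw u y))
        ≤ ENNReal.ofReal (lam / c))


namespace Aux4

lemma distrib_antitone (h : ℝ → ℝ≥0∞) : Antitone (distrib h) := by
  intro a b hab
  exact measure_mono (fun x hx => ⟨hx.1, lt_of_le_of_lt hab hx.2⟩)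

lemma distrib_top (h : ℝ → ℝ≥0∞) : distrib h ⊤ = 0 := by
  have : {x : ℝ | 0 < x ∧ (⊤:ℝ≥0∞) < h x} = ∅ := by
    ext x; simp [not_top_lt]
  simp [distrib, this]

lemma rearr_le_iff (h : ℝ → ℝ≥0∞) (l : ℝ≥0∞) (s : ℝ) :
    rearr h s ≤ l ↔ distrib h l ≤ ENNReal.ofReal s := by
  constructor
  · intro hle
    rcases eq_or_ne l ⊤ with rfl | hl
    · simp [distrib_top]
    -- right continuity
    have hset : {x : ℝ | 0 < x ∧ l < h x} =
        ⋃ n : ℕ, {x : ℝ | 0 < x ∧ l + ((n:ℝ≥0∞))⁻¹ < h x} := by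
      ext x
      simp only [Set.mem_setOf_eq, Set.mem_iUnion]
      constructor
      · rintro ⟨hx0, hxl⟩
        obtain ⟨c, hc1, hc2⟩ := exists_between hxl
        have hcl : c - l ≠ 0 := by
          simpa [tsub_eq_zero_iff_le] using not_le.mpr hc1
        obtain ⟨n, hn⟩ := ENNReal.exists_inv_nat_lt hcl
        refine ⟨n, hx0, ?_⟩
        calc l + ((n:ℝ≥0∞))⁻¹ < l + (c - l) := ENNReal.add_lt_add_left hl hn
          _ = c := add_tsub_cancel_of_le hc1.le
          _ < h x := hc2
      · rintro ⟨n, hx0, hxl⟩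
        exact ⟨hx0, lt_of_le_of_lt le_self_add hxl⟩
    have hmono : Monotone (fun n : ℕ => {x : ℝ | 0 < x ∧ l + ((n:ℝ≥0∞))⁻¹ < h x}) := by
      intro n m hnm x hx
      refine ⟨hx.1, lt_of_le_of_lt (add_le_add_right ?_ l) hx.2⟩
      exact ENNReal.inv_le_inv.mpr (by exact_mod_cast hnm)
    have := Directed.measure_iUnion (μ := volume) hmono.directed_le
    rw [distrib, hset, this]
    refine iSup_le fun n => ?_
    rcases Nat.eq_zero_or_pos n with rfl | hn
    · simp only [Nat.cast_zero, ENNReal.inv_zero]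
      calc volume {x : ℝ | 0 < x ∧ l + ⊤ < h x} = distrib h (l + ⊤) := rfl
        _ ≤ 0 := by simp [distrib_top]
        _ ≤ _ := zero_le
    · have hlt : rearr h s < l + ((n:ℝ≥0∞))⁻¹ := by
        refine lt_of_le_of_lt hle (ENNReal.lt_add_right hl ?_)
        simp [hn.ne', ENNReal.inv_ne_zero]
      obtain ⟨l', hl'S, hl'lt⟩ := sInf_lt_iff.mp hlt
      exact le_trans (distrib_antitone h hl'lt.le) hl'S
  · intro hd
    exact sInf_le hd

lemma lt_rearr_iff (h : ℝ → ℝ≥0∞) (l : ℝ≥0∞) (s : ℝ) :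
    l < rearr h s ↔ ENNReal.ofReal s < distrib h l := by
  rw [← not_le, ← not_le, rearr_le_iff]

lemma rearr_antitone (h : ℝ → ℝ≥0∞) : Antitone (rearr h) := by
  intro a b hab
  exact le_sInf fun l hl => sInf_le (le_trans hl (ENNReal.ofReal_le_ofReal hab))

lemma rearr_measurable (h : ℝ → ℝ≥0∞) : Measurable (rearr h) :=
  (rearr_antitone h).measurable

lemma volP (m : ℝ≥0∞) : volume {s : ℝ | 0 < s ∧ ENNReal.ofReal s < m} = m := by
  rcases eq_or_ne m ⊤ with rfl | hm
  · have : {s : ℝ | 0 < s ∧ ENNReal.ofReal s < ⊤} = Ioi (0:ℝ) := by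
      ext s; simp [ENNReal.ofReal_lt_top]
    rw [this]; simp [Real.volume_Ioi]
  · have : {s : ℝ | 0 < s ∧ ENNReal.ofReal s < m} = Ioo 0 m.toReal := by
      ext s
      simp only [Set.mem_setOf_eq, Set.mem_Ioo, and_congr_right_iff]
      intro hs
      rw [ENNReal.ofReal_lt_iff_lt_toReal hs.le hm]
    rw [this, Real.volume_Ioo]
    simp [ENNReal.ofReal_toReal hm]
  

lemma measurableSet_Am (m : ℝ≥0∞) : MeasurableSet {s : ℝ | 0 < s ∧ ENNReal.ofReal s < m} := by
  have : {s : ℝ | 0 < s ∧ ENNReal.ofReal s < m} = Ioi 0 ∩ (ENNReal.ofReal ⁻¹' Iio m) := rfl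
  rw [this]
  exact measurableSet_Ioi.inter (ENNReal.measurable_ofReal measurableSet_Iio)

lemma lint_indicator_one_mul (s : Set ℝ) (hs : MeasurableSet s) (f : ℝ → ℝ≥0∞)
    (A : Set ℝ) (hA : MeasurableSet A) :
    ∫⁻ y in A, s.indicator (fun _ => (1:ℝ≥0∞)) y * f y = ∫⁻ y in A ∩ s, f y := by
  have h1 : ∀ y, s.indicator (fun _ => (1:ℝ≥0∞)) y * f y = s.indicator f y := by
    intro y
    by_cases hy : y ∈ s <;> simp [Set.indicator, hy]
  simp_rw [h1]
  rw [lintegral_indicator hs, Measure.restrict_restrict hs]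
  rw [Set.inter_comm]

lemma lint_indicator_one (s : Set ℝ) (hs : MeasurableSet s) (A : Set ℝ) (hA : MeasurableSet A) :
    ∫⁻ y in A, s.indicator (fun _ => (1:ℝ≥0∞)) y = volume (A ∩ s) := by
  rw [lintegral_indicator hs, Measure.restrict_restrict hs, Set.inter_comm,
    setLIntegral_one]

lemma layercake (h : ℝ → ℝ≥0∞) (hh : Measurable h) (A : Set ℝ) (hA : MeasurableSet A) :
    ∫⁻ x in A, h x = ∫⁻ l in Ioi (0:ℝ), volume (A ∩ {x | ENNReal.ofReal l < h x}) := by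
  set S : Set (ℝ × ℝ) := {p | ENNReal.ofReal p.2 < h p.1} with hSdef
  have hS : MeasurableSet S :=
    measurableSet_lt (ENNReal.measurable_ofReal.comp measurable_snd) (hh.comp measurable_fst)
  have key1 : ∀ x, (∫⁻ l in Ioi (0:ℝ), S.indicator (fun _ => (1:ℝ≥0∞)) (x, l)) = h x := by
    intro x
    have : ∀ l : ℝ, S.indicator (fun _ => (1:ℝ≥0∞)) (x, l)
        = ({l : ℝ | ENNReal.ofReal l < h x}).indicator (fun _ => (1:ℝ≥0∞)) l := by
      intro l
      by_cases hl : ENNReal.ofReal l < h x <;> simp [Set.indicator, hSdef, hl]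
    simp_rw [this]
    rw [lint_indicator_one {l : ℝ | ENNReal.ofReal l < h x}
      (by exact ENNReal.measurable_ofReal measurableSet_Iio) (Ioi 0) measurableSet_Ioi]
    have : Ioi (0:ℝ) ∩ {l : ℝ | ENNReal.ofReal l < h x}
        = {l : ℝ | 0 < l ∧ ENNReal.ofReal l < h x} := rfl
    rw [this, volP]
  have key2 : ∀ l, (∫⁻ x in A, S.indicator (fun _ => (1:ℝ≥0∞)) (x, l))
      = volume (A ∩ {x | ENNReal.ofReal l < h x}) := by
    intro l
    have : ∀ x : ℝ, S.indicator (fun _ => (1:ℝ≥0∞)) (x, l)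
        = ({x : ℝ | ENNReal.ofReal l < h x}).indicator (fun _ => (1:ℝ≥0∞)) x := by
      intro x
      by_cases hl : ENNReal.ofReal l < h x <;> simp [Set.indicator, hSdef, hl]
    simp_rw [this]
    exact lint_indicator_one _ (hh measurableSet_Ioi) _ hA
  calc ∫⁻ x in A, h x = ∫⁻ x in A, ∫⁻ l in Ioi (0:ℝ), S.indicator (fun _ => (1:ℝ≥0∞)) (x, l) := by
        simp_rw [key1]
    _ = ∫⁻ l in Ioi (0:ℝ), ∫⁻ x in A, S.indicator (fun _ => (1:ℝ≥0∞)) (x, l) := by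
        apply lintegral_lintegral_swap
        exact ((measurable_one.indicator hS).comp measurable_id).aemeasurable
    _ = _ := by simp_rw [key2]

lemma HL1 (h : ℝ → ℝ≥0∞) (hh : Measurable h) (E : Set ℝ) (hE : MeasurableSet E)
    (hE0 : E ⊆ Ioi 0) (m : ℝ≥0∞) (hEm : volume E ≤ m) :
    ∫⁻ x in E, h x ≤ ∫⁻ s in {s : ℝ | 0 < s ∧ ENNReal.ofReal s < m}, rearr h s := by
  rw [layercake h hh E hE, layercake _ (rearr_measurable h) _ (measurableSet_Am m)]
  apply lintegral_mono
  intro l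
  dsimp only
  have hrset : {s : ℝ | 0 < s ∧ ENNReal.ofReal s < m} ∩ {s | ENNReal.ofReal l < rearr h s}
      = {s : ℝ | 0 < s ∧ ENNReal.ofReal s < min m (distrib h (ENNReal.ofReal l))} := by
    ext s
    simp only [Set.mem_inter_iff, Set.mem_setOf_eq, lt_rearr_iff, lt_min_iff]
    tauto
  rw [hrset, volP]
  refine le_min (le_trans (measure_mono Set.inter_subset_left) hEm) ?_
  refine measure_mono fun x hx => ?_
  exact ⟨hE0 hx.1, hx.2⟩

lemma HL2 (k f : ℝ → ℝ≥0∞) (hk : Measurable k) (hf : Measurable f) :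
    ∫⁻ y in Ioi (0:ℝ), k y * f y ≤ ∫⁻ s in Ioi (0:ℝ), rearr k s * rearr f s := by
  set S : Set (ℝ × ℝ) := {p | ENNReal.ofReal p.2 < k p.1} with hSdef
  have hS : MeasurableSet S :=
    measurableSet_lt (ENNReal.measurable_ofReal.comp measurable_snd) (hk.comp measurable_fst)
  set S' : Set (ℝ × ℝ) := {p | ENNReal.ofReal p.1 < rearr k p.2} with hS'def
  have hS' : MeasurableSet S' :=
    measurableSet_lt (ENNReal.measurable_ofReal.comp measurable_fst)
      ((rearr_measurable k).comp measurable_snd)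
  have key1 : ∀ y, k y * f y = ∫⁻ l in Ioi (0:ℝ), S.indicator (fun _ => (1:ℝ≥0∞)) (y, l) * f y := by
    intro y
    rw [lintegral_mul_const _ (by exact (measurable_one.indicator hS).comp (measurable_prodMk_left))]
    congr 1
    have : ∀ l : ℝ, S.indicator (fun _ => (1:ℝ≥0∞)) (y, l)
        = ({l : ℝ | ENNReal.ofReal l < k y}).indicator (fun _ => (1:ℝ≥0∞)) l := by
      intro l
      by_cases hl : ENNReal.ofReal l < k y <;> simp [Set.indicator, hSdef, hl]
    simp_rw [this]
    rw [lint_indicator_one {l : ℝ | ENNReal.ofReal l < k y}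
      (by exact ENNReal.measurable_ofReal measurableSet_Iio) (Ioi 0) measurableSet_Ioi]
    exact (volP (k y)).symm
  have key1' : ∀ s, rearr k s * rearr f s
      = ∫⁻ l in Ioi (0:ℝ), S'.indicator (fun _ => (1:ℝ≥0∞)) (l, s) * rearr f s := by
    intro s
    have hm : Measurable fun l : ℝ => S'.indicator (fun _ => (1:ℝ≥0∞)) (l, s) :=
      (measurable_one.indicator hS').comp (measurable_id.prodMk measurable_const)
    rw [lintegral_mul_const _ hm]
    congr 1
    have : ∀ l : ℝ, S'.indicator (fun _ => (1:ℝ≥0∞)) (l, s)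
        = ({l : ℝ | ENNReal.ofReal l < rearr k s}).indicator (fun _ => (1:ℝ≥0∞)) l := by
      intro l
      by_cases hl : ENNReal.ofReal l < rearr k s <;> simp [Set.indicator, hS'def, hl]
    simp_rw [this]
    rw [lint_indicator_one {l : ℝ | ENNReal.ofReal l < rearr k s}
      (by exact ENNReal.measurable_ofReal measurableSet_Iio) (Ioi 0) measurableSet_Ioi]
    exact (volP (rearr k s)).symm
  calc ∫⁻ y in Ioi (0:ℝ), k y * f y
      = ∫⁻ y in Ioi (0:ℝ), ∫⁻ l in Ioi (0:ℝ), S.indicator (fun _ => (1:ℝ≥0∞)) (y, l) * f y := by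
        simp_rw [← key1]
    _ = ∫⁻ l in Ioi (0:ℝ), ∫⁻ y in Ioi (0:ℝ), S.indicator (fun _ => (1:ℝ≥0∞)) (y, l) * f y := by
        apply lintegral_lintegral_swap
        exact ((measurable_one.indicator hS).mul (hf.comp measurable_fst)).aemeasurable
    _ ≤ ∫⁻ l in Ioi (0:ℝ), ∫⁻ s in Ioi (0:ℝ), S'.indicator (fun _ => (1:ℝ≥0∞)) (l, s) * rearr f s := by
        apply lintegral_mono
        intro l
        dsimp only
        have h1 : ∀ y, S.indicator (fun _ => (1:ℝ≥0∞)) (y, l) * f y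
            = ({y : ℝ | ENNReal.ofReal l < k y}).indicator (fun _ => (1:ℝ≥0∞)) y * f y := by
          intro y
          by_cases hy : ENNReal.ofReal l < k y <;> simp [Set.indicator, hSdef, hy]
        have h2 : ∀ s, S'.indicator (fun _ => (1:ℝ≥0∞)) (l, s) * rearr f s
            = ({s : ℝ | ENNReal.ofReal l < rearr k s}).indicator (fun _ => (1:ℝ≥0∞)) s
              * rearr f s := by
          intro s
          by_cases hy : ENNReal.ofReal l < rearr k s <;> simp [Set.indicator, hS'def, hy]
        simp_rw [h1, h2]
        rw [lint_indicator_one_mul {y : ℝ | ENNReal.ofReal l < k y} (hk measurableSet_Ioi) f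
          (Ioi 0) measurableSet_Ioi,
          lint_indicator_one_mul {s : ℝ | ENNReal.ofReal l < rearr k s}
          ((rearr_measurable k) measurableSet_Ioi) (rearr f) (Ioi 0) measurableSet_Ioi]
        have hEq : Ioi (0:ℝ) ∩ {s : ℝ | ENNReal.ofReal l < rearr k s}
            = {s : ℝ | 0 < s ∧ ENNReal.ofReal s < distrib k (ENNReal.ofReal l)} := by
          ext s
          simp only [Set.mem_inter_iff, Set.mem_Ioi, Set.mem_setOf_eq, lt_rearr_iff]
        rw [hEq]
        apply HL1 f hf _ (measurableSet_Ioi.inter (hk measurableSet_Ioi))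
          Set.inter_subset_left
        exact le_of_eq rfl
    _ = ∫⁻ s in Ioi (0:ℝ), ∫⁻ l in Ioi (0:ℝ), S'.indicator (fun _ => (1:ℝ≥0∞)) (l, s) * rearr f s := by
        apply lintegral_lintegral_swap
        exact ((measurable_one.indicator hS').mul
          ((rearr_measurable f).comp measurable_snd)).aemeasurable
    _ = _ := by simp_rw [← key1']

lemma distrib_slice_measurable (G : ℝ → ℝ → ℝ≥0∞) (hG : Measurable (Function.uncurry G))
    (l : ℝ≥0∞) : Measurable fun x => distrib (G x) l := by
  have hset : MeasurableSet {p : ℝ × ℝ | 0 < p.2 ∧ l < G p.1 p.2} :=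
    (measurable_snd measurableSet_Ioi).inter (hG measurableSet_Ioi)
  have h := measurable_measure_prodMk_left (ν := (volume : Measure ℝ)) hset
  convert h using 2
  rfl

lemma rearr2_measurable (G : ℝ → ℝ → ℝ≥0∞) (hG : Measurable (Function.uncurry G)) :
    Measurable fun p : ℝ × ℝ => rearr (G p.1) p.2 := by
  apply measurable_of_Iic
  intro l
  have : (fun p : ℝ × ℝ => rearr (G p.1) p.2) ⁻¹' Iic l
      = {p : ℝ × ℝ | distrib (G p.1) l ≤ ENNReal.ofReal p.2} := by
    ext p; simp [rearr_le_iff]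
  rw [this]
  exact measurableSet_le ((distrib_slice_measurable G hG l).comp measurable_fst)
    (ENNReal.measurable_ofReal.comp measurable_snd)

lemma iterRearr_measurable (K : ℝ → ℝ → ℝ≥0∞) (hK : Measurable (Function.uncurry K)) :
    Measurable fun p : ℝ × ℝ => iterRearr K p.1 p.2 := by
  have h2 : Measurable (Function.uncurry fun s x' => rearr (K x') s) := by
    have : (Function.uncurry fun s x' => rearr (K x') s)
        = (fun p : ℝ × ℝ => rearr (K p.1) p.2) ∘ Prod.swap := rfl
    rw [this]
    exact (rearr2_measurable K hK).comp measurable_swap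
  have := (rearr2_measurable (fun s x' => rearr (K x') s) h2).comp
    (measurable_swap : Measurable (Prod.swap : ℝ × ℝ → ℝ × ℝ))
  exact this

lemma exact_subset (W : Set ℝ) (hW : MeasurableSet W) (hW0 : W ⊆ Ioi 0) (r : ℝ≥0∞)
    (hr : r ≤ volume W) (hrtop : r ≠ ⊤) :
    ∃ D, D ⊆ W ∧ MeasurableSet D ∧ volume D = r := by
  by_cases hrW : r = volume W
  · exact ⟨W, subset_rfl, hW, hrW.symm⟩
  have hlt : r < volume W := hr.lt_of_ne hrW
  set φ : ℝ → ℝ≥0∞ := fun c => volume (W ∩ Iio c) with hφ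
  have hfin : ∀ c, φ c ≤ ENNReal.ofReal c := by
    intro c
    calc φ c ≤ volume (Ioo 0 c) := measure_mono fun x hx => ⟨hW0 hx.1, hx.2⟩
      _ = ENNReal.ofReal c := by rw [Real.volume_Ioo]; simp
  have hfin' : ∀ c, φ c ≠ ⊤ := fun c => (lt_of_le_of_lt (hfin c) ENNReal.ofReal_lt_top).ne
  have hcov : volume W = ⨆ n : ℕ, φ n := by
    have hU : W = ⋃ n : ℕ, W ∩ Iio (n:ℝ) := by
      ext x
      simp only [Set.mem_iUnion, Set.mem_inter_iff, Set.mem_Iio]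
      constructor
      · intro hx
        obtain ⟨n, hn⟩ := exists_nat_gt x
        exact ⟨n, hx, hn⟩
      · rintro ⟨n, hx, _⟩; exact hx
    rw [hU]
    apply Directed.measure_iUnion
    apply Monotone.directed_le
    intro a b hab x hx
    simp only [Set.mem_inter_iff, Set.mem_Iio] at hx ⊢
    exact ⟨hx.1, lt_of_lt_of_le hx.2 (Nat.cast_le.mpr hab)⟩
  obtain ⟨n, hn⟩ : ∃ n : ℕ, r < φ n := by
    rw [hcov] at hlt
    exact lt_iSup_iff.mp hlt
  set ψ : ℝ → ℝ := fun c => (φ c).toReal with hψ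
  have hmono : ∀ a b : ℝ, a ≤ b → φ a ≤ φ b := by
    intro a b hab
    exact measure_mono (Set.inter_subset_inter_right _ (Iio_subset_Iio hab))
  have hlip0 : ∀ a b : ℝ, a ≤ b → φ b ≤ φ a + ENNReal.ofReal (b - a) := by
    intro a b hab
    calc φ b ≤ volume ((W ∩ Iio a) ∪ Ico a b) := by
          apply measure_mono
          rintro x ⟨hxW, hxb⟩
          rcases lt_or_ge x a with hxa | hxa
          · exact Or.inl ⟨hxW, hxa⟩
          · exact Or.inr ⟨hxa, hxb⟩
      _ ≤ φ a + volume (Ico a b) := measure_union_le _ _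
      _ = φ a + ENNReal.ofReal (b - a) := by rw [Real.volume_Ico]
  have hlip : LipschitzWith 1 ψ := by
    apply LipschitzWith.of_dist_le_mul
    intro a b
    simp only [NNReal.coe_one, one_mul, Real.dist_eq]
    rcases le_total a b with hab | hab
    · have h1 : ψ a ≤ ψ b := ENNReal.toReal_mono (hfin' b) (hmono a b hab)
      have h2 : ψ b ≤ ψ a + (b - a) := by
        have := hlip0 a b hab
        have := ENNReal.toReal_mono (by
          exact ENNReal.add_ne_top.mpr ⟨hfin' a, ENNReal.ofReal_ne_top⟩) this
        rwa [ENNReal.toReal_add (hfin' a) ENNReal.ofReal_ne_top,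
          ENNReal.toReal_ofReal (by linarith)] at this
      rw [abs_of_nonpos (by linarith), abs_of_nonpos (by linarith)]
      linarith
    · have h1 : ψ b ≤ ψ a := ENNReal.toReal_mono (hfin' a) (hmono b a hab)
      have h2 : ψ a ≤ ψ b + (a - b) := by
        have := hlip0 b a hab
        have := ENNReal.toReal_mono (by
          exact ENNReal.add_ne_top.mpr ⟨hfin' b, ENNReal.ofReal_ne_top⟩) this
        rwa [ENNReal.toReal_add (hfin' b) ENNReal.ofReal_ne_top,
          ENNReal.toReal_ofReal (by linarith)] at this
      rw [abs_of_nonneg (by linarith), abs_of_nonneg (by linarith)]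
      linarith
  have hψ0 : ψ 0 = 0 := by
    have : W ∩ Iio (0:ℝ) = ∅ := by
      ext x
      simp only [Set.mem_inter_iff, Set.mem_Iio, Set.mem_empty_iff_false, iff_false, not_and]
      intro hx
      exact not_lt.mpr (le_of_lt (hW0 hx))
    simp [hψ, hφ, this]
  have hψn : r.toReal ≤ ψ n := ENNReal.toReal_mono (hfin' n) hn.le
  have h0n : (0:ℝ) ≤ (n:ℝ) := Nat.cast_nonneg n
  have hIVT := intermediate_value_Icc h0n (hlip.continuous.continuousOn)
  have hmem : r.toReal ∈ Icc (ψ 0) (ψ (n:ℝ)) := ⟨by rw [hψ0]; exact ENNReal.toReal_nonneg, hψn⟩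
  obtain ⟨c, _, hc⟩ := hIVT hmem
  refine ⟨W ∩ Iio c, Set.inter_subset_left, hW.inter measurableSet_Iio, ?_⟩
  have := (ENNReal.toReal_eq_toReal_iff' (hfin' c) hrtop).mp hc
  exact this

lemma iSup_ofReal_Ioo (r : ℝ) (hr : 0 < r) :
    ⨆ x : Ioo (0:ℝ) r, ENNReal.ofReal (x:ℝ) = ENNReal.ofReal r := by
  apply le_antisymm
  · exact iSup_le fun x => ENNReal.ofReal_le_ofReal x.2.2.le
  · have hmem : ∀ n : ℕ, r * (1 - 1/(n+2)) ∈ Ioo (0:ℝ) r := by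
      intro n
      have h1 : (0:ℝ) < (n:ℝ) + 2 := by positivity
      have h2 : (1:ℝ)/((n:ℝ)+2) < 1 := by rw [div_lt_one h1]; linarith [Nat.cast_nonneg (α := ℝ) n]
      have h3 : (0:ℝ) < 1/((n:ℝ)+2) := by positivity
      constructor
      · nlinarith
      · nlinarith
    have htends : Filter.Tendsto (fun n : ℕ => ENNReal.ofReal (r * (1 - 1/(n+2))))
        Filter.atTop (nhds (ENNReal.ofReal r)) := by
      apply (ENNReal.continuous_ofReal.tendsto r).comp
      have h0 : Filter.Tendsto (fun n : ℕ => 1/((n:ℝ)+2)) Filter.atTop (nhds 0) := by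
        apply squeeze_zero (fun n => by positivity) (fun n => ?_)
          tendsto_one_div_add_atTop_nhds_zero_nat
        have h1 : (0:ℝ) < (n:ℝ) + 1 := by positivity
        apply div_le_div_of_nonneg_left (by norm_num) h1 (by linarith)
      have : Filter.Tendsto (fun n : ℕ => r * (1 - 1/((n:ℝ)+2))) Filter.atTop (nhds (r * (1-0))) :=
        (tendsto_const_nhds.sub h0).const_mul r
      simpa using this
    apply le_of_tendsto' htends
    intro n
    exact le_iSup_of_le ⟨_, hmem n⟩ le_rfl

lemma Aside (g : ℝ → ℝ≥0∞) (hg : Measurable g) (t : ℝ) (ht : 0 < t) (C : ℝ≥0∞)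
    (hC : ∀ E : Set ℝ, MeasurableSet E → E ⊆ Ioi 0 → volume E ≤ ENNReal.ofReal t →
      ∫⁻ x in E, g x ≤ C) :
    ∫⁻ s in Ioo (0:ℝ) t, rearr g s ≤ C := by
  set T := ENNReal.ofReal t with hT
  have hT0 : T ≠ 0 := by simp [hT, ht, ENNReal.ofReal_eq_zero, not_le]
  have hTtop : T ≠ ⊤ := ENNReal.ofReal_ne_top
  set τ := rearr g t with hτ
  set m := distrib g τ with hm
  have hmT : m ≤ T := (rearr_le_iff g τ t).mp le_rfl
  rcases eq_or_ne τ ⊤ with hτt | hτt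
  · -- τ = ⊤ : LHS = ⊤ and C = ⊤
    have hCtop : C = ⊤ := by
      by_contra hne
      have hb : ∀ n : ℕ, (n:ℝ≥0∞) * T ≤ C := by
        intro n
        have hlt : T < distrib g (n:ℝ≥0∞) := by
          rw [← lt_rearr_iff]
          rw [← hτ, hτt]
          exact (ENNReal.natCast_lt_top n)
        obtain ⟨D, hDsub, hDm, hDvol⟩ := exact_subset {x : ℝ | 0 < x ∧ (n:ℝ≥0∞) < g x}
          ((measurableSet_Ioi.inter (hg measurableSet_Ioi))) (fun x hx => hx.1) T hlt.le hTtop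
        have h1 : (n:ℝ≥0∞) * T ≤ ∫⁻ x in D, g x := by
          rw [← hDvol, ← setLIntegral_const D ((n:ℝ≥0∞))]
          exact setLIntegral_mono' hDm fun x hx => (hDsub hx).2.le
        exact le_trans h1 (hC D hDm (fun x hx => (hDsub hx).1) (le_of_eq hDvol))
      have : (⨆ n : ℕ, (n:ℝ≥0∞)) * T ≤ C := by rw [ENNReal.iSup_mul]; exact iSup_le hb
      rw [ENNReal.iSup_natCast, ENNReal.top_mul hT0] at this
      exact hne (top_le_iff.mp this)
    rw [hCtop]
    exact le_top
  -- τ ≠ ⊤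
  set F := {x : ℝ | 0 < x ∧ τ < g x} with hF
  have hFm : MeasurableSet F := measurableSet_Ioi.inter (hg measurableSet_Ioi)
  have hFsub : F ⊆ Ioi 0 := fun x hx => hx.1
  have hFvol : volume F = m := rfl
  have hFC : ∫⁻ x in F, g x ≤ C := hC F hFm hFsub (hFvol.le.trans hmT)
  -- Step 1: LHS ≤ ∫_F g + (T - m) * τ
  have step1 : ∫⁻ s in Ioo (0:ℝ) t, rearr g s ≤ (∫⁻ x in F, g x) + (T - m) * τ := by
    rw [layercake (rearr g) (rearr_measurable g) _ measurableSet_Ioo,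
      layercake g hg F hFm]
    have hbound : ∀ l : ℝ,
        volume (Ioo 0 t ∩ {s | ENNReal.ofReal l < rearr g s})
        ≤ volume (F ∩ {x | ENNReal.ofReal l < g x})
          + (T - m) * ({l : ℝ | ENNReal.ofReal l < τ}).indicator (fun _ => (1:ℝ≥0∞)) l := by
      intro l
      have hLHS : volume (Ioo 0 t ∩ {s | ENNReal.ofReal l < rearr g s})
          = min T (distrib g (ENNReal.ofReal l)) := by
        have : Ioo 0 t ∩ {s | ENNReal.ofReal l < rearr g s}
            = {s : ℝ | 0 < s ∧ ENNReal.ofReal s < min T (distrib g (ENNReal.ofReal l))} := by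
          ext s
          simp only [Set.mem_inter_iff, Set.mem_Ioo, Set.mem_setOf_eq, lt_rearr_iff, lt_min_iff]
          constructor
          · rintro ⟨⟨h1, h2⟩, h3⟩
            exact ⟨h1, ENNReal.ofReal_lt_ofReal_iff ht |>.mpr h2, h3⟩
          · rintro ⟨h1, h2, h3⟩
            exact ⟨⟨h1, (ENNReal.ofReal_lt_ofReal_iff ht).mp h2⟩, h3⟩
        rw [this, volP]
      rw [hLHS]
      rcases le_or_gt τ (ENNReal.ofReal l) with hcase | hcase
      · -- indicator = 0, F ∩ {g > l} is the full superlevel set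
        have hind : ({l : ℝ | ENNReal.ofReal l < τ}).indicator (fun _ => (1:ℝ≥0∞)) l = 0 := by
          simp [Set.indicator, not_lt.mpr hcase]
        rw [hind, mul_zero, add_zero]
        have hset : F ∩ {x | ENNReal.ofReal l < g x} = {x : ℝ | 0 < x ∧ ENNReal.ofReal l < g x} := by
          ext x
          simp only [hF, Set.mem_inter_iff, Set.mem_setOf_eq]
          constructor
          · rintro ⟨⟨h1, _⟩, h3⟩; exact ⟨h1, h3⟩
          · rintro ⟨h1, h2⟩; exact ⟨⟨h1, lt_of_le_of_lt hcase h2⟩, h2⟩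
        rw [hset]
        exact min_le_right _ _
      · -- l < τ: min = T, F ∩ {g>l} = F
        have hind : ({l : ℝ | ENNReal.ofReal l < τ}).indicator (fun _ => (1:ℝ≥0∞)) l = 1 := by
          simp [Set.indicator, hcase]
        rw [hind, mul_one]
        have hset : F ∩ {x | ENNReal.ofReal l < g x} = F := by
          apply Set.inter_eq_left.mpr
          intro x hx
          exact lt_trans hcase hx.2
        rw [hset, hFvol]
        calc min T (distrib g (ENNReal.ofReal l)) ≤ T := min_le_left _ _
          _ = m + (T - m) := (add_tsub_cancel_of_le hmT).symm
    calc ∫⁻ l in Ioi (0:ℝ), volume (Ioo 0 t ∩ {s | ENNReal.ofReal l < rearr g s})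
        ≤ ∫⁻ l in Ioi (0:ℝ), (volume (F ∩ {x | ENNReal.ofReal l < g x})
          + (T - m) * ({l : ℝ | ENNReal.ofReal l < τ}).indicator (fun _ => (1:ℝ≥0∞)) l) :=
          lintegral_mono hbound
      _ = (∫⁻ l in Ioi (0:ℝ), volume (F ∩ {x | ENNReal.ofReal l < g x}))
          + ∫⁻ l in Ioi (0:ℝ), (T - m) * ({l : ℝ | ENNReal.ofReal l < τ}).indicator
            (fun _ => (1:ℝ≥0∞)) l := by
          apply lintegral_add_right
          exact ((measurable_one.indicator
            (by exact ENNReal.measurable_ofReal measurableSet_Iio)).const_mul _)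
      _ ≤ (∫⁻ l in Ioi (0:ℝ), volume (F ∩ {x | ENNReal.ofReal l < g x})) + (T - m) * τ := by
          apply add_le_add_right
          have hmeas : Measurable ({l : ℝ | ENNReal.ofReal l < τ}.indicator
              (fun _ => (1:ℝ≥0∞))) :=
            measurable_const.indicator (by exact ENNReal.measurable_ofReal measurableSet_Iio)
          rw [lintegral_const_mul _ hmeas]
          apply mul_le_mul_right
          rw [lint_indicator_one {l : ℝ | ENNReal.ofReal l < τ}
            (by exact ENNReal.measurable_ofReal measurableSet_Iio) (Ioi 0) measurableSet_Ioi]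
          have heq : Ioi (0:ℝ) ∩ {l : ℝ | ENNReal.ofReal l < τ}
              = {l : ℝ | 0 < l ∧ ENNReal.ofReal l < τ} := rfl
          rw [heq, volP]
  -- Step 2: ∫_F g + (T - m) * τ ≤ C
  refine step1.trans ?_
  rcases eq_or_ne τ 0 with hτ0 | hτ0
  · rw [hτ0, mul_zero, add_zero]; exact hFC
  · -- 0 < τ < ⊤
    have hrpos : 0 < τ.toReal := ENNReal.toReal_pos hτ0 hτt
    set r := τ.toReal with hr
    have hτr : τ = ENNReal.ofReal r := (ENNReal.ofReal_toReal hτt).symm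
    have key : ∀ x : Ioo (0:ℝ) r, (∫⁻ x in F, g x) + ENNReal.ofReal (x:ℝ) * (T - m) ≤ C := by
      rintro ⟨lam, hlam⟩
      have hlamt : ENNReal.ofReal lam < τ := by
        rw [hτr]
        exact (ENNReal.ofReal_lt_ofReal_iff hrpos).mpr hlam.2
      have hdT : T < distrib g (ENNReal.ofReal lam) := by
        rw [← lt_rearr_iff]; exact hlamt
      set S := {x : ℝ | 0 < x ∧ ENNReal.ofReal lam < g x} with hS
      have hSm : MeasurableSet S := measurableSet_Ioi.inter (hg measurableSet_Ioi)
      set W := S \ F with hW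
      have hWm : MeasurableSet W := hSm.diff hFm
      have hWvol : T - m ≤ volume W := by
        rw [tsub_le_iff_right]
        calc T ≤ volume S := hdT.le
          _ ≤ volume (W ∪ F) := measure_mono (by
              intro x hx
              by_cases hxF : x ∈ F
              · exact Or.inr hxF
              · exact Or.inl ⟨hx, hxF⟩)
          _ ≤ volume W + volume F := measure_union_le _ _
          _ = volume W + m := by rw [hFvol]
      obtain ⟨D, hDsub, hDm, hDvol⟩ := exact_subset W hWm
        (fun x hx => hx.1.1) (T - m) hWvol
        ((lt_of_le_of_lt tsub_le_self (lt_top_iff_ne_top.mpr hTtop)).ne)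
      have hdisj : Disjoint F D := by
        apply Set.disjoint_left.mpr
        intro x hxF hxD
        exact (hDsub hxD).2 hxF
      have hEm : MeasurableSet (F ∪ D) := hFm.union hDm
      have hEsub : F ∪ D ⊆ Ioi 0 := by
        rintro x (hx | hx)
        · exact hx.1
        · exact (hDsub hx).1.1
      have hEvol : volume (F ∪ D) ≤ T := by
        calc volume (F ∪ D) ≤ volume F + volume D := measure_union_le _ _
          _ = m + (T - m) := by rw [hFvol, hDvol]
          _ = T := add_tsub_cancel_of_le hmT
      have hint : (∫⁻ x in F, g x) + ENNReal.ofReal lam * (T - m) ≤ ∫⁻ x in F ∪ D, g x := by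
        rw [lintegral_union hDm hdisj]
        apply add_le_add_right
        calc ENNReal.ofReal lam * (T - m) = ENNReal.ofReal lam * volume D := by rw [hDvol]
          _ = ∫⁻ _ in D, ENNReal.ofReal lam := (setLIntegral_const D _).symm
          _ ≤ ∫⁻ x in D, g x := setLIntegral_mono' hDm fun x hx => ((hDsub hx).1.2).le
      exact hint.trans (hC _ hEm hEsub hEvol)
    have hne : Nonempty (Ioo (0:ℝ) r) := (nonempty_Ioo.mpr hrpos).to_subtype
    calc (∫⁻ x in F, g x) + (T - m) * τ
        = (∫⁻ x in F, g x) + (T - m) * ⨆ x : Ioo (0:ℝ) r, ENNReal.ofReal (x:ℝ) := by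
          rw [iSup_ofReal_Ioo r hrpos, ← hτr]
      _ = ⨆ x : Ioo (0:ℝ) r, ((∫⁻ x in F, g x) + ENNReal.ofReal (x:ℝ) * (T - m)) := by
          rw [ENNReal.mul_iSup, ENNReal.add_iSup]
          congr 1
          ext x
          rw [mul_comm]
      _ ≤ C := iSup_le key

lemma Ioo_eq_Am (t : ℝ) (ht : 0 < t) :
    {s : ℝ | 0 < s ∧ ENNReal.ofReal s < ENNReal.ofReal t} = Ioo 0 t := by
  ext s
  simp only [Set.mem_setOf_eq, Set.mem_Ioo, and_congr_right_iff]
  intro _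
  exact ENNReal.ofReal_lt_ofReal_iff ht

lemma TK_measurable (K : ℝ → ℝ → ℝ≥0∞) (hK : Measurable (Function.uncurry K))
    (f : ℝ → ℝ≥0∞) (hf : Measurable f) : Measurable (TK K f) := by
  apply Measurable.lintegral_prod_right' (f := fun p : ℝ × ℝ => K p.1 p.2 * f p.2)
  exact hK.mul (hf.comp measurable_snd)

set_option maxHeartbeats 2000000 in
theorem statement4' (K : ℝ → ℝ → ℝ≥0∞) (hK : Measurable (Function.uncurry K))
    (f : ℝ → ℝ≥0∞) (hf : Measurable f) (t : ℝ) (ht : 0 < t) :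
    (∫⁻ s in Ioo (0:ℝ) t, rearr (TK K f) s) ≤
      ∫⁻ s in Ioo (0:ℝ) t, rearr (TK (iterRearr K) (rearr f)) s := by
  have hL : Measurable fun p : ℝ × ℝ => iterRearr K p.1 p.2 := iterRearr_measurable K hK
  have hfr : Measurable (rearr f) := rearr_measurable f
  have hTL : Measurable (TK (iterRearr K) (rearr f)) := by
    apply Measurable.lintegral_prod_right'
      (f := fun p : ℝ × ℝ => iterRearr K p.1 p.2 * rearr f p.2)
    exact hL.mul (hfr.comp measurable_snd)
  apply Aside (TK K f) (TK_measurable K hK f hf) t ht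
  intro E hEm hEsub hEvol
  have hK2 : Measurable fun p : ℝ × ℝ => rearr (K p.1) p.2 := rearr2_measurable K hK
  calc ∫⁻ x in E, TK K f x
      ≤ ∫⁻ x in E, ∫⁻ s in Ioi (0:ℝ), rearr (K x) s * rearr f s := by
        apply lintegral_mono
        intro x
        exact HL2 (K x) f (hK.comp measurable_prodMk_left) hf
    _ = ∫⁻ s in Ioi (0:ℝ), ∫⁻ x in E, rearr (K x) s * rearr f s := by
        apply lintegral_lintegral_swap
        exact (hK2.mul (hfr.comp measurable_snd)).aemeasurable
    _ = ∫⁻ s in Ioi (0:ℝ), (∫⁻ x in E, rearr (K x) s) * rearr f s := by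
        apply lintegral_congr
        intro s
        exact lintegral_mul_const _ (hK2.comp (measurable_id.prodMk measurable_const))
    _ ≤ ∫⁻ s in Ioi (0:ℝ), (∫⁻ x in Ioo (0:ℝ) t, iterRearr K x s) * rearr f s := by
        apply lintegral_mono
        intro s
        apply mul_le_mul_left
        have h1 := HL1 (fun x => rearr (K x) s)
          (hK2.comp (measurable_id.prodMk measurable_const)) E hEm hEsub
          (ENNReal.ofReal t) hEvol
        rw [Ioo_eq_Am t ht] at h1
        exact h1
    _ = ∫⁻ s in Ioi (0:ℝ), ∫⁻ x in Ioo (0:ℝ) t, iterRearr K x s * rearr f s := by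
        apply lintegral_congr
        intro s
        exact (lintegral_mul_const _ (hL.comp (measurable_id.prodMk measurable_const))).symm
    _ = ∫⁻ x in Ioo (0:ℝ) t, ∫⁻ s in Ioi (0:ℝ), iterRearr K x s * rearr f s := by
        apply lintegral_lintegral_swap
        refine Measurable.aemeasurable ?_
        have : (Function.uncurry fun s x => iterRearr K x s * rearr f s)
            = (fun p : ℝ × ℝ => iterRearr K p.1 p.2 * rearr f p.2) ∘ Prod.swap := rfl
        rw [this]
        exact (hL.mul (hfr.comp measurable_snd)).comp measurable_swap
    _ = ∫⁻ x in Ioo (0:ℝ) t, TK (iterRearr K) (rearr f) x := rfl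
    _ ≤ ∫⁻ s in Ioo (0:ℝ) t, rearr (TK (iterRearr K) (rearr f)) s := by
        have h1 := HL1 (TK (iterRearr K) (rearr f)) hTL (Ioo 0 t) measurableSet_Ioo
          Ioo_subset_Ioi_self (ENNReal.ofReal t)
          (by rw [Real.volume_Ioo]; simp)
        rw [Ioo_eq_Am t ht] at h1
        exact h1

end Aux4

theorem statement4
    (K : ℝ → ℝ → ℝ≥0∞) (hK : Measurable (Function.uncurry K))
    (f : ℝ → ℝ≥0∞) (hf : Measurable f) (t : ℝ) (ht : 0 < t) :
    (∫⁻ s in Ioo (0:ℝ) t, rearr (TK K f) s) / ENNReal.ofReal t ≤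
      (∫⁻ s in Ioo (0:ℝ) t, rearr (TK (iterRearr K) (rearr f)) s) / ENNReal.ofReal t := by
  exact ENNReal.div_le_div_right (Aux4.statement4' K hK f hf t ht) _

end
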